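/- arXiv:2012.05457 — 2 statements merged into one kernel-verified Lean document; each statement's English description precedes it below -/
import Mathlib

section
/- If the power sums agree, the ordered tuples agree: for x, y ∈ [0,1]^M with x₁ ≤ ⋯ ≤ x_M and y₁ ≤ ⋯ ≤ y_M, if Σ_{m=1}^M x_m^k = Σ_{m=1}^M y_m^k for every k ∈ {1,…,M}, then x = y. -/
open MvPolynomial Polynomial

/-- If the power sums of order `1,…,M` of two nondecreasing `M`-tuples in `[0,1]`
agree, then the tuples agree. -/
theorem eq_of_powerSums_eq (M : ℕ) (hM : 0 < M) (x y : Fin M → ℝ)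
    (hx : ∀ m, x m ∈ Set.Icc (0 : ℝ) 1) (hy : ∀ m, y m ∈ Set.Icc (0 : ℝ) 1)
    (hxmono : Monotone x) (hymono : Monotone y)
    (hps : ∀ k ∈ Finset.Icc 1 M, ∑ m, (x m) ^ k = ∑ m, (y m) ^ k) :
    x = y := by
  -- power sums evaluated
  have hpsum : ∀ k ∈ Finset.Icc 1 M,
      MvPolynomial.eval x (MvPolynomial.psum (Fin M) ℝ k)
        = MvPolynomial.eval y (MvPolynomial.psum (Fin M) ℝ k) := by
    intro k hk
    simpa [MvPolynomial.psum, map_sum] using hps k hk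
  -- elementary symmetric functions agree
  have key : ∀ k, k ≤ M → MvPolynomial.eval x (MvPolynomial.esymm (Fin M) ℝ k)
      = MvPolynomial.eval y (MvPolynomial.esymm (Fin M) ℝ k) := by
    intro k
    induction k using Nat.strong_induction_on with
    | _ k ih =>
      intro hk
      rcases Nat.eq_zero_or_pos k with rfl | hk0
      · simp
      · have hx1 := congrArg (MvPolynomial.eval x) (MvPolynomial.mul_esymm_eq_sum (Fin M) ℝ k)
        have hy1 := congrArg (MvPolynomial.eval y) (MvPolynomial.mul_esymm_eq_sum (Fin M) ℝ k)
        simp only [map_mul, map_sum, map_pow, map_neg, map_one, map_natCast] at hx1 hy1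
        have hsum : ∑ a ∈ Finset.filter (fun a => a.1 < k) (Finset.HasAntidiagonal.antidiagonal k),
              (-1:ℝ) ^ a.1 * MvPolynomial.eval x (MvPolynomial.esymm (Fin M) ℝ a.1)
                * MvPolynomial.eval x (MvPolynomial.psum (Fin M) ℝ a.2)
            = ∑ a ∈ Finset.filter (fun a => a.1 < k) (Finset.HasAntidiagonal.antidiagonal k),
              (-1:ℝ) ^ a.1 * MvPolynomial.eval y (MvPolynomial.esymm (Fin M) ℝ a.1)
                * MvPolynomial.eval y (MvPolynomial.psum (Fin M) ℝ a.2) := by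
          refine Finset.sum_congr rfl ?_
          intro a ha
          rw [Finset.mem_filter, Finset.HasAntidiagonal.mem_antidiagonal] at ha
          obtain ⟨hak, halt⟩ := ha
          have h1 : a.1 ≤ M := le_trans (le_of_lt halt) hk
          have h2 : a.2 ∈ Finset.Icc 1 M := by
            rw [Finset.mem_Icc]
            omega
          rw [ih a.1 halt h1, hpsum a.2 h2]
        have hkne : (k : ℝ) ≠ 0 := Nat.cast_ne_zero.mpr (by omega)
        exact mul_left_cancel₀ hkne (by rw [hx1, hy1, hsum])
  -- eval of esymm equals multiset esymm
  have heval : ∀ (f : Fin M → ℝ) (n : ℕ),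
      MvPolynomial.eval f (MvPolynomial.esymm (Fin M) ℝ n)
        = (Finset.univ.val.map f).esymm n := by
    intro f n
    rw [MvPolynomial.esymm, map_sum, Finset.esymm_map_val]
    refine Finset.sum_congr rfl ?_
    intro t _
    rw [map_prod]
    simp
  set s : Multiset ℝ := Finset.univ.val.map x with hs
  set t : Multiset ℝ := Finset.univ.val.map y with ht
  have hcards : Multiset.card s = M := by simp [hs]
  have hcardt : Multiset.card t = M := by simp [ht]
  have hesymm : ∀ j, j ≤ M → s.esymm j = t.esymm j := by
    intro j hj
    rw [← heval x j, ← heval y j]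
    exact key j hj
  -- the two polynomials agree
  have hpoly : (s.map fun a => Polynomial.X - Polynomial.C a).prod = (t.map fun a => Polynomial.X - Polynomial.C a).prod := by
    ext k
    by_cases hkM : k ≤ M
    · rw [Multiset.prod_X_sub_C_coeff s (hcards ▸ hkM),
        Multiset.prod_X_sub_C_coeff t (hcardt ▸ hkM), hcards, hcardt,
        hesymm (M - k) (Nat.sub_le _ _)]
    · rw [Polynomial.coeff_eq_zero_of_natDegree_lt, Polynomial.coeff_eq_zero_of_natDegree_lt]
      · rw [Polynomial.natDegree_multiset_prod_X_sub_C_eq_card, hcardt]; omega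
      · rw [Polynomial.natDegree_multiset_prod_X_sub_C_eq_card, hcards]; omega
  have hst : s = t := by
    have := congrArg Polynomial.roots hpoly
    rwa [Polynomial.roots_multiset_prod_X_sub_C, Polynomial.roots_multiset_prod_X_sub_C] at this
  -- conclude from sortedness
  have hofn : (List.ofFn x : Multiset ℝ) = (List.ofFn y : Multiset ℝ) := by
    rwa [hs, ht, Fin.univ_val_map, Fin.univ_val_map] at hst
  have hperm : (List.ofFn x).Perm (List.ofFn y) := Multiset.coe_eq_coe.mp hofn
  have : List.ofFn x = List.ofFn y :=
    List.Perm.eq_of_sortedLE (List.sortedLE_ofFn_iff.mpr hxmono)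
      (List.sortedLE_ofFn_iff.mpr hymono) hperm
  exact List.ofFn_injective this
end

section
/- Every permutation-invariant continuous function h : [0,1]^M → ℝ admits a sum-decomposition: there exist continuous functions ρ̄ : ℝ^{M+1} → ℝ and φ̄ : ℝ → ℝ^{M+1} such that h(x₁,…,x_M) = ρ̄(Σ_{m=1}^M φ̄(x_m)) for all x ∈ [0,1]^M. -/
open Finset Polynomial

/-- Two tuples with the same multiset of values differ by a permutation. -/
lemma exists_perm_of_multiset_eq' {M : ℕ} {x y : Fin M → ℝ}
    (hxy : (Finset.univ.val.map x) = (Finset.univ.val.map y)) :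
    ∃ π : Equiv.Perm (Fin M), x ∘ π = y := by
  rw [Fin.univ_val_map, Fin.univ_val_map, Multiset.coe_eq_coe] at hxy
  have h1 : List.Perm (List.ofFn (x ∘ Tuple.sort x)) (List.ofFn (y ∘ Tuple.sort y)) :=
    ((Equiv.Perm.ofFn_comp_perm (Tuple.sort x) x).trans hxy).trans
      (Equiv.Perm.ofFn_comp_perm (Tuple.sort y) y).symm
  have h2 : List.ofFn (x ∘ Tuple.sort x) = List.ofFn (y ∘ Tuple.sort y) :=
    List.Perm.eq_of_sortedLE ((List.sortedLE_ofFn_iff).mpr (Tuple.monotone_sort x))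
      ((List.sortedLE_ofFn_iff).mpr (Tuple.monotone_sort y)) h1
  have h3 : x ∘ Tuple.sort x = y ∘ Tuple.sort y := List.ofFn_injective h2
  refine ⟨(Tuple.sort y).symm.trans (Tuple.sort x), ?_⟩
  funext i
  have := congrFun h3 ((Tuple.sort y).symm i)
  simpa using this

/-- Equal power sums (up to the cardinality) give equal elementary symmetric functions. -/
lemma esymm_eq_of_psum_eq {M : ℕ} {x y : Fin M → ℝ}
    (hp : ∀ k : ℕ, k ≤ M → ∑ m, x m ^ k = ∑ m, y m ^ k) :
    ∀ k : ℕ, k ≤ M →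
      (Finset.univ.val.map x).esymm k = (Finset.univ.val.map y).esymm k := by
  intro k
  induction k using Nat.strong_induction_on with
  | _ k ih =>
    intro hkM
    rcases Nat.eq_zero_or_pos k with rfl | hk
    · simp [Multiset.esymm]
    · have hx := congrArg (MvPolynomial.aeval x) (MvPolynomial.mul_esymm_eq_sum (Fin M) ℝ k)
      have hy := congrArg (MvPolynomial.aeval y) (MvPolynomial.mul_esymm_eq_sum (Fin M) ℝ k)
      simp only [map_mul, map_natCast, map_pow, map_neg, map_one, map_sum,
        MvPolynomial.aeval_esymm_eq_multiset_esymm, MvPolynomial.psum, MvPolynomial.aeval_X]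
        at hx hy
      have hsum : ∑ a ∈ (Finset.HasAntidiagonal.antidiagonal k).filter (fun a => a.1 < k),
            (-1 : ℝ) ^ a.1 * (Finset.univ.val.map x).esymm a.1 * (∑ m, x m ^ a.2)
          = ∑ a ∈ (Finset.HasAntidiagonal.antidiagonal k).filter (fun a => a.1 < k),
            (-1 : ℝ) ^ a.1 * (Finset.univ.val.map y).esymm a.1 * (∑ m, y m ^ a.2) := by
        refine Finset.sum_congr rfl fun a ha => ?_
        obtain ⟨ha1, ha2⟩ := Finset.mem_filter.mp ha
        have hadd := Finset.HasAntidiagonal.mem_antidiagonal.mp ha1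
        rw [ih a.1 ha2 (le_trans (le_of_lt ha2) hkM), hp a.2 (by omega)]
      have hkne : ((k : ℝ)) ≠ 0 := Nat.cast_ne_zero.mpr hk.ne'
      apply mul_left_cancel₀ hkne
      rw [hx, hy, hsum]

/-- Multisets of reals with equal cardinality and equal elementary symmetric
functions are equal. -/
lemma multiset_eq_of_esymm_eq {s t : Multiset ℝ} (hcard : Multiset.card s = Multiset.card t)
    (he : ∀ k, k ≤ Multiset.card s → s.esymm k = t.esymm k) : s = t := by
  have hP : (s.map fun a => X - C a).prod = (t.map fun a => X - C a).prod := by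
    apply Polynomial.ext
    intro k
    by_cases hk : k ≤ Multiset.card s
    · rw [Multiset.prod_X_sub_C_coeff s hk, Multiset.prod_X_sub_C_coeff t (hcard ▸ hk), ← hcard,
        he _ (Nat.sub_le _ _)]
    · rw [Polynomial.coeff_eq_zero_of_natDegree_lt, Polynomial.coeff_eq_zero_of_natDegree_lt]
      · rw [natDegree_multiset_prod_X_sub_C_eq_card, ← hcard]; omega
      · rw [natDegree_multiset_prod_X_sub_C_eq_card]; omega
  have := congrArg Polynomial.roots hP
  rwa [Polynomial.roots_multiset_prod_X_sub_C, Polynomial.roots_multiset_prod_X_sub_C] at this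

/-- Deep sets representation theorem (homogeneous case): every permutation-invariant
continuous function `h : [0,1]^M → ℝ` can be written as `h x = ρ (∑ m, φ (x m))`
with continuous `ρ : ℝ^{M+1} → ℝ` and `φ : ℝ → ℝ^{M+1}`. -/
theorem deepSets_representation (M : ℕ) (hM : 0 < M) (h : (Fin M → ℝ) → ℝ)
    (hcont : ContinuousOn h {x : Fin M → ℝ | ∀ m, x m ∈ Set.Icc (0 : ℝ) 1})
    (hinv : ∀ (π : Equiv.Perm (Fin M)) (x : Fin M → ℝ),
      (∀ m, x m ∈ Set.Icc (0 : ℝ) 1) → h (x ∘ π) = h x) :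
    ∃ (ρ : (Fin (M + 1) → ℝ) → ℝ) (φ : ℝ → (Fin (M + 1) → ℝ)),
      Continuous ρ ∧ Continuous φ ∧
        ∀ x : Fin M → ℝ, (∀ m, x m ∈ Set.Icc (0 : ℝ) 1) →
          h x = ρ (∑ m, φ (x m)) := by
  classical
  set K : Set (Fin M → ℝ) := {x : Fin M → ℝ | ∀ m, x m ∈ Set.Icc (0 : ℝ) 1} with hK
  have hKc : IsCompact K := by
    have : K = Set.pi Set.univ (fun _ : Fin M => Set.Icc (0 : ℝ) 1) := by
      ext z; simp only [hK, Set.mem_setOf_eq, Set.mem_univ_pi]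
    rw [this]
    exact isCompact_univ_pi fun _ => isCompact_Icc
  -- the power-sum map
  set q : (Fin M → ℝ) → (Fin (M + 1) → ℝ) :=
    fun x => fun k => ∑ m, x m ^ (k : ℕ) with hq
  have hqc : Continuous q := by
    refine continuous_pi fun k => ?_
    exact continuous_finset_sum _ fun m _ => (continuous_apply m).pow _
  -- h is constant on fibers of q within K
  have hfib : ∀ x ∈ K, ∀ y ∈ K, q x = q y → h x = h y := by
    intro x hx y hy hxy
    have hp : ∀ k : ℕ, k ≤ M → ∑ m, x m ^ k = ∑ m, y m ^ k := by
      intro k hk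
      exact congrFun hxy ⟨k, Nat.lt_succ_of_le hk⟩
    have hcards : Multiset.card (Finset.univ.val.map x)
        = Multiset.card (Finset.univ.val.map y) := by simp
    have hms : (Finset.univ.val.map x) = (Finset.univ.val.map y) := by
      refine multiset_eq_of_esymm_eq hcards ?_
      intro k hk
      have hkM : k ≤ M := by simpa using hk
      exact esymm_eq_of_psum_eq hp k hkM
    obtain ⟨π, hπ⟩ := exists_perm_of_multiset_eq' hms
    rw [← hπ]
    exact (hinv π x hx).symm
  -- the compact image
  set S : Set (Fin (M + 1) → ℝ) := q '' K with hS
  have hSc : IsCompact S := hKc.image hqc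
  have hScl : IsClosed S := hSc.isClosed
  -- compact space structure on K
  haveI : CompactSpace K := isCompact_iff_compactSpace.mp hKc
  -- restricted map q' : K → S
  set q' : K → S := fun p => ⟨q p.1, ⟨p.1, p.2, rfl⟩⟩ with hq'
  have hq'c : Continuous q' := Continuous.subtype_mk (hqc.comp continuous_subtype_val) _
  have hq'surj : Function.Surjective q' := by
    rintro ⟨z, w, hw, rfl⟩
    exact ⟨⟨w, hw⟩, rfl⟩
  have hquot : Topology.IsQuotientMap q' := (hq'c.isClosedMap).isQuotientMap hq'c hq'surj
  -- g : K → ℝ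
  set g : K → ℝ := fun p => h p.1 with hg
  have hgc : Continuous g := continuousOn_iff_continuous_restrict.mp hcont
  -- descend to ρ₀ : S → ℝ
  set ρ₀ : S → ℝ := fun z => g (Function.surjInv hq'surj z) with hρ₀
  have hfactor : ∀ p : K, ρ₀ (q' p) = g p := by
    intro p
    have hs : q' (Function.surjInv hq'surj (q' p)) = q' p := Function.surjInv_eq hq'surj (q' p)
    have : q (Function.surjInv hq'surj (q' p)).1 = q p.1 := congrArg Subtype.val hs
    exact hfib _ (Function.surjInv hq'surj (q' p)).2 _ p.2 this
  have hρ₀c : Continuous ρ₀ := by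
    rw [hquot.continuous_iff]
    have : ρ₀ ∘ q' = g := funext hfactor
    rw [this]; exact hgc
  -- Tietze extension
  obtain ⟨ρC, hρC⟩ := ContinuousMap.exists_restrict_eq (Y := ℝ) hScl ⟨ρ₀, hρ₀c⟩
  refine ⟨ρC, fun z => fun k => z ^ (k : ℕ), ρC.continuous,
    continuous_pi fun k => continuous_pow _, ?_⟩
  intro x hx
  have hqx : q x = ∑ m, (fun k : Fin (M + 1) => x m ^ (k : ℕ)) := by
    funext k
    rw [Finset.sum_apply]
  rw [← hqx]
  have hmem : q x ∈ S := ⟨x, hx, rfl⟩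
  have h1 : ρC (q x) = ρ₀ ⟨q x, hmem⟩ := by
    have := congrFun (congrArg ContinuousMap.toFun hρC) ⟨q x, hmem⟩
    simpa using this
  rw [h1]
  have h2 : ρ₀ ⟨q x, hmem⟩ = g ⟨x, hx⟩ := hfactor ⟨x, hx⟩
  rw [h2]
end
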